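/- Let H be a commutative ℚ-algebra and q ∈ H. (a) For all m, m' ≥ 0 and n, n' ≥ 0, the polynomial (D + m'q)^n · D^{n'} − D^n · (D + mq)^{n'} in H[D] is divisible by q, with quotient equal to Σ_{i=1}^{n} binom(n,i) (m')^i D^{n+n'−i} q^{i−1} − Σ_{j=1}^{n'} binom(n',j) m^j D^{n+n'−j} q^{j−1}. (b) The bracket on the free H-module with basis {z^m D^n : m ≥ 1, n ≥ 0} defined by [z^m D^n λ, z^{m'} D^{n'} μ] = z^{m+m'} · ((D + m'q)^n D^{n'} − D^n (D + mq)^{n'})/q · λμ (interpreting the quotient via part (a)) satisfies the Jacobi identity. -/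

import Mathlib

open Polynomial

/-- The free `H`-module with basis `{z^m D^n : m ≥ 1, n ≥ 0}`, encoded as finitely
supported `H`-valued functions on `ℕ+ × ℕ`. -/
abbrev SemiDefW (H : Type*) [CommRing H] [Algebra ℚ H] := (ℕ+ × ℕ) →₀ H

/-- The bracket of generators of the semi-deformed Lie algebra:
`[z^m D^n λ, z^{m'} D^{n'} μ]` equals `z^{m+m'}` times the quotient
`((D + m'q)^n D^{n'} − D^n (D + mq)^{n'})/q` applied to `λμ`, expanded in the basis via
part (a) of the statement. -/
noncomputable def sdGen {H : Type*} [CommRing H] [Algebra ℚ H] (q : H)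
    (p : ℕ+ × ℕ) (lam : H) (r : ℕ+ × ℕ) (mu : H) : SemiDefW H :=
  (∑ i ∈ Finset.Icc 1 p.2,
      (p.2.choose i * ((r.1 : ℕ)) ^ i) •
        Finsupp.single (p.1 + r.1, p.2 + r.2 - i) (q ^ (i - 1) * (lam * mu)))
  - ∑ j ∈ Finset.Icc 1 r.2,
      (r.2.choose j * ((p.1 : ℕ)) ^ j) •
        Finsupp.single (p.1 + r.1, p.2 + r.2 - j) (q ^ (j - 1) * (lam * mu))

/-- The bilinear extension of `sdGen` to the whole module. -/
noncomputable def sdBr {H : Type*} [CommRing H] [Algebra ℚ H] (q : H)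
    (x y : SemiDefW H) : SemiDefW H :=
  x.sum fun p lam => y.sum fun r mu => sdGen q p lam r mu

noncomputable section SDAuxSection
namespace SDAux

lemma sum_range_split {M : Type*} [AddCommMonoid M] (n : ℕ) (f : ℕ → M) :
    ∑ i ∈ Finset.range (n+1), f i = f 0 + ∑ i ∈ Finset.Icc 1 n, f i := by
  have h : Finset.range (n+1) = insert 0 (Finset.Icc 1 n) := by
    ext k; simp only [Finset.mem_range, Finset.mem_insert, Finset.mem_Icc]; omega
  rw [h, Finset.sum_insert (by simp)]

variable {H : Type*} [CommRing H]

/-- Helper: additivity of sums of singles over `Icc 1 N`. -/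
private lemma icc_lin {N : ℕ} (c : ℕ → ℕ) (k : ℕ → ℕ+ × ℕ) (v w u : ℕ → H)
    (h : ∀ i, v i = w i + u i) :
    (∑ i ∈ Finset.Icc 1 N, c i • Finsupp.single (k i) (v i))
      = (∑ i ∈ Finset.Icc 1 N, c i • Finsupp.single (k i) (w i))
        + ∑ i ∈ Finset.Icc 1 N, c i • Finsupp.single (k i) (u i) := by
  rw [← Finset.sum_add_distrib]
  refine Finset.sum_congr rfl fun i _ => ?_
  rw [h i]
  simp [Finsupp.single_add, smul_add]

private lemma icc_smul {N : ℕ} (c : ℕ → ℕ) (k : ℕ → ℕ+ × ℕ) (v w : ℕ → H) (d : H)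
    (h : ∀ i, v i = d * w i) :
    (∑ i ∈ Finset.Icc 1 N, c i • Finsupp.single (k i) (v i))
      = d • ∑ i ∈ Finset.Icc 1 N, c i • Finsupp.single (k i) (w i) := by
  rw [Finset.smul_sum]
  refine Finset.sum_congr rfl fun i _ => ?_
  rw [h i]
  simp only [Finsupp.smul_single]
  congr 1
  simp only [smul_eq_mul, nsmul_eq_mul]
  ring

/-- generator of the associated associative product -/
def mG (q : H) (p : ℕ+ × ℕ) (l : H) (r : ℕ+ × ℕ) (m : H) : (ℕ+ × ℕ) →₀ H :=
  ∑ i ∈ Finset.range (p.2 + 1),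
    (p.2.choose i * ((r.1 : ℕ)) ^ i) •
      Finsupp.single (p.1 + r.1, p.2 + r.2 - i) (q ^ i * (l * m))

lemma mG_zero_left (q : H) (p r : ℕ+ × ℕ) (m : H) : mG q p 0 r m = 0 := by
  simp [mG]

lemma mG_zero_right (q : H) (p r : ℕ+ × ℕ) (l : H) : mG q p l r 0 = 0 := by
  simp [mG]

lemma mG_add_left (q : H) (p r : ℕ+ × ℕ) (l l' m : H) :
    mG q p (l + l') r m = mG q p l r m + mG q p l' r m := by
  simp only [mG, ← Finset.sum_add_distrib]
  refine Finset.sum_congr rfl fun i _ => ?_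
  simp only [Finsupp.smul_single, ← Finsupp.single_add]
  congr 1
  simp only [smul_eq_mul, nsmul_eq_mul]
  ring

lemma mG_add_right (q : H) (p r : ℕ+ × ℕ) (l m m' : H) :
    mG q p l r (m + m') = mG q p l r m + mG q p l r m' := by
  simp only [mG, ← Finset.sum_add_distrib]
  refine Finset.sum_congr rfl fun i _ => ?_
  simp only [Finsupp.smul_single, ← Finsupp.single_add]
  congr 1
  simp only [smul_eq_mul, nsmul_eq_mul]
  ring

lemma mG_sub_right (q : H) (p r : ℕ+ × ℕ) (l m m' : H) :
    mG q p l r (m - m') = mG q p l r m - mG q p l r m' := by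
  simp only [mG, ← Finset.sum_sub_distrib]
  refine Finset.sum_congr rfl fun i _ => ?_
  simp only [Finsupp.smul_single, ← Finsupp.single_sub]
  congr 1
  simp only [smul_eq_mul, nsmul_eq_mul]
  ring

lemma mG_sub_left (q : H) (p r : ℕ+ × ℕ) (l l' m : H) :
    mG q p (l - l') r m = mG q p l r m - mG q p l' r m := by
  simp only [mG, ← Finset.sum_sub_distrib]
  refine Finset.sum_congr rfl fun i _ => ?_
  simp only [Finsupp.smul_single, ← Finsupp.single_sub]
  congr 1
  simp only [smul_eq_mul, nsmul_eq_mul]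
  ring

lemma mG_smul_left (q : H) (p r : ℕ+ × ℕ) (c l m : H) :
    mG q p (c * l) r m = c • mG q p l r m := by
  simp only [mG, Finset.smul_sum]
  refine Finset.sum_congr rfl fun i _ => ?_
  simp only [Finsupp.smul_single]
  congr 1
  simp only [smul_eq_mul, nsmul_eq_mul]
  ring

lemma mG_smul_right (q : H) (p r : ℕ+ × ℕ) (c l m : H) :
    mG q p l r (c * m) = c • mG q p l r m := by
  simp only [mG, Finset.smul_sum]
  refine Finset.sum_congr rfl fun i _ => ?_
  simp only [Finsupp.smul_single]
  congr 1
  simp only [smul_eq_mul, nsmul_eq_mul]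
  ring

/-- one generator acting as an operator on `ℕ →₀ H[X]` -/
def Tg (q : H) (p : ℕ+ × ℕ) (l : H) : (ℕ →₀ H[X]) →ₗ[H] (ℕ →₀ H[X]) :=
  Finsupp.lsum H fun a =>
    (Finsupp.lsingle (a + (p.1 : ℕ))) ∘ₗ
      (LinearMap.mulLeft H (C l * (X + C ((a : H) * q)) ^ p.2))

lemma Tg_single (q : H) (p : ℕ+ × ℕ) (l : H) (a : ℕ) (f : H[X]) :
    Tg q p l (Finsupp.single a f) =
      Finsupp.single (a + (p.1 : ℕ)) (C l * (X + C ((a : H) * q)) ^ p.2 * f) := by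
  simp [Tg, mul_assoc]

lemma Tg_zero (q : H) (p : ℕ+ × ℕ) : Tg q p (0 : H) = 0 := by
  apply Finsupp.lhom_ext
  intro a f
  simp [Tg_single]

/-- `Tg` bundled as linear in the coefficient -/
def TgL (q : H) (p : ℕ+ × ℕ) : H →ₗ[H] ((ℕ →₀ H[X]) →ₗ[H] (ℕ →₀ H[X])) where
  toFun l := Tg q p l
  map_add' l l' := by
    apply Finsupp.lhom_ext
    intro a f
    simp only [Tg_single, LinearMap.add_apply, C_add, ← Finsupp.single_add]
    congr 1
    ring
  map_smul' c l := by
    apply Finsupp.lhom_ext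
    intro a f
    simp only [Tg_single, RingHom.id_apply, LinearMap.smul_apply, Finsupp.smul_single,
      smul_eq_mul, Polynomial.smul_eq_C_mul, C_mul]
    congr 1
    ring

/-- the representation of the module on `ℕ →₀ H[X]` -/
def T (q : H) : ((ℕ+ × ℕ) →₀ H) →ₗ[H] ((ℕ →₀ H[X]) →ₗ[H] (ℕ →₀ H[X])) :=
  Finsupp.lsum H fun p => TgL q p

@[simp] lemma T_single (q : H) (p : ℕ+ × ℕ) (l : H) :
    T q (Finsupp.single p l) = Tg q p l := by
  simp only [T, Finsupp.lsum_apply]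
  rw [Finsupp.sum_single_index]
  · rfl
  · exact Tg_zero q p

/-- The key binomial computation: composition of generator operators. -/
lemma Tg_comp (q : H) (p r : ℕ+ × ℕ) (l m : H) :
    (Tg q p l) ∘ₗ (Tg q r m) =
      ∑ i ∈ Finset.range (p.2 + 1),
        (p.2.choose i * ((r.1 : ℕ)) ^ i) •
          Tg q (p.1 + r.1, p.2 + r.2 - i) (q ^ i * (l * m)) := by
  apply Finsupp.lhom_ext
  intro a f
  simp only [LinearMap.comp_apply, Tg_single, LinearMap.sum_apply, LinearMap.smul_apply,
    Finsupp.smul_single]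
  have hkey : ∀ i : ℕ, a + ((p.1 + r.1 : ℕ+) : ℕ) = a + (r.1 : ℕ) + (p.1 : ℕ) := by
    intro i; push_cast; omega
  rw [Finset.sum_congr rfl (fun i _ => by rw [hkey i])]
  rw [show (∑ i ∈ Finset.range (p.2 + 1),
      Finsupp.single (a + (r.1:ℕ) + (p.1:ℕ))
        ((p.2.choose i * ((r.1:ℕ)) ^ i) • (C (q ^ i * (l * m)) * (X + C ((a:H) * q)) ^ (p.2 + r.2 - i) * f)))
      = Finsupp.single (a + (r.1:ℕ) + (p.1:ℕ)) (∑ i ∈ Finset.range (p.2 + 1),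
        ((p.2.choose i * ((r.1:ℕ)) ^ i) • (C (q ^ i * (l * m)) * (X + C ((a:H) * q)) ^ (p.2 + r.2 - i) * f)))
    from (map_sum (Finsupp.singleAddHom (a + (r.1:ℕ) + (p.1:ℕ))) _ _).symm]
  congr 1
  have expand : (X + C (((a + (r.1:ℕ) : ℕ) : H) * q)) ^ p.2
      = ∑ i ∈ Finset.range (p.2 + 1),
          (C ((r.1:ℕ) * q : H)) ^ i * (X + C ((a:H) * q)) ^ (p.2 - i) * (p.2.choose i : H[X]) := by
    rw [show (X + C (((a + (r.1:ℕ) : ℕ) : H) * q)) = C ((r.1:ℕ) * q : H) + (X + C ((a:H) * q)) by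
      push_cast; rw [add_mul, map_add]; ring]
    exact add_pow _ _ _
  rw [expand, Finset.mul_sum, Finset.sum_mul]
  refine Finset.sum_congr rfl fun i hi => ?_
  have hip : i ≤ p.2 := by simpa using Nat.lt_succ_iff.mp (Finset.mem_range.mp hi)
  have he : p.2 + r.2 - i = (p.2 - i) + r.2 := by omega
  rw [he, nsmul_eq_mul]
  push_cast
  simp only [map_mul, map_pow, map_natCast]
  ring

lemma T_mG (q : H) (p r : ℕ+ × ℕ) (l m : H) :
    T q (mG q p l r m) = (Tg q p l) ∘ₗ (Tg q r m) := by
  rw [Tg_comp, mG, map_sum]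
  refine Finset.sum_congr rfl fun i _ => ?_
  rw [map_nsmul, T_single]

/-- coefficient extraction: the representation is injective -/
lemma T_coeff (q : H) (x : (ℕ+ × ℕ) →₀ H) (p : ℕ+ × ℕ) :
    ((T q x (Finsupp.single 0 1)) ((p.1 : ℕ))).coeff p.2 = x p := by
  induction x using Finsupp.induction_linear with
  | zero => simp
  | add f g hf hg =>
      rw [map_add, LinearMap.add_apply, Finsupp.add_apply, coeff_add, hf, hg, Finsupp.add_apply]
  | single r l =>
      rw [T_single, Tg_single]
      simp only [Nat.cast_zero, zero_mul, map_zero, add_zero, mul_one, zero_add]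
      rw [Finsupp.single_apply, Finsupp.single_apply]
      by_cases h1 : r = p
      · subst h1
        simp [coeff_C_mul, coeff_X_pow]
      · rw [if_neg h1]
        by_cases h2 : ((r.1 : ℕ)) = ((p.1 : ℕ))
        · have h3 : r.2 ≠ p.2 := by
            intro h4
            exact h1 (Prod.ext (PNat.coe_injective h2) h4)
          rw [if_pos h2, coeff_C_mul, coeff_X_pow, if_neg (fun h => h3 h.symm)]
          simp
        · rw [if_neg h2, coeff_zero]

lemma T_inj (q : H) : Function.Injective (T q) := by
  intro x y h
  ext p
  rw [← T_coeff q x p, ← T_coeff q y p, h]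

/-- the bilinear extension of `mG` -/
def mB (q : H) (x y : (ℕ+ × ℕ) →₀ H) : (ℕ+ × ℕ) →₀ H :=
  x.sum fun p l => y.sum fun r m => mG q p l r m

lemma mB_zero_left (q : H) (y : (ℕ+ × ℕ) →₀ H) : mB q 0 y = 0 :=
  Finsupp.sum_zero_index

lemma mB_single_left (q : H) (p : ℕ+ × ℕ) (l : H) (y : (ℕ+ × ℕ) →₀ H) :
    mB q (Finsupp.single p l) y = y.sum fun r m => mG q p l r m := by
  unfold mB
  rw [Finsupp.sum_single_index]
  simp [mG_zero_left]

lemma mB_add_left (q : H) (x x' y : (ℕ+ × ℕ) →₀ H) :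
    mB q (x + x') y = mB q x y + mB q x' y := by
  unfold mB
  refine Finsupp.sum_add_index' (fun p => by simp [mG_zero_left]) fun p l l' => ?_
  simp [mG_add_left]

lemma mB_add_right (q : H) (x y y' : (ℕ+ × ℕ) →₀ H) :
    mB q x (y + y') = mB q x y + mB q x y' := by
  unfold mB
  rw [← Finsupp.sum_add]
  refine Finsupp.sum_congr fun p _ => ?_
  exact Finsupp.sum_add_index' (fun r => mG_zero_right q p r _) fun r m m' =>
    mG_add_right q p r _ m m'

lemma mB_sub_left (q : H) (x x' y : (ℕ+ × ℕ) →₀ H) :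
    mB q (x - x') y = mB q x y - mB q x' y := by
  unfold mB
  refine Finsupp.sum_sub_index fun p l l' => ?_
  rw [← Finsupp.sum_sub]
  refine Finsupp.sum_congr fun r _ => ?_
  exact mG_sub_left q p r l l' _

lemma mB_sub_right (q : H) (x y y' : (ℕ+ × ℕ) →₀ H) :
    mB q x (y - y') = mB q x y - mB q x y' := by
  unfold mB
  rw [← Finsupp.sum_sub]
  refine Finsupp.sum_congr fun p _ => ?_
  exact Finsupp.sum_sub_index fun r m m' => mG_sub_right q p r _ m m'

lemma mB_smul_left (q c : H) (x y : (ℕ+ × ℕ) →₀ H) :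
    mB q (c • x) y = c • mB q x y := by
  unfold mB
  rw [Finsupp.sum_smul_index' (fun p => by simp [mG_zero_left]), Finsupp.smul_sum]
  refine Finsupp.sum_congr fun p _ => ?_
  rw [Finsupp.smul_sum]
  refine Finsupp.sum_congr fun r _ => ?_
  rw [smul_eq_mul, mG_smul_left]

lemma mB_smul_right (q c : H) (x y : (ℕ+ × ℕ) →₀ H) :
    mB q x (c • y) = c • mB q x y := by
  unfold mB
  rw [Finsupp.smul_sum]
  refine Finsupp.sum_congr fun p _ => ?_
  rw [Finsupp.sum_smul_index' (fun r => mG_zero_right q p r _), Finsupp.smul_sum]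
  refine Finsupp.sum_congr fun r _ => ?_
  rw [smul_eq_mul, mG_smul_right]

lemma T_mB (q : H) (x y : (ℕ+ × ℕ) →₀ H) :
    T q (mB q x y) = (T q x) ∘ₗ (T q y) := by
  induction x using Finsupp.induction_linear with
  | zero => rw [mB_zero_left, map_zero]; exact (LinearMap.zero_comp _).symm
  | add f g hf hg =>
      rw [mB_add_left, map_add, hf, hg, map_add, LinearMap.add_comp]
  | single p l =>
      rw [mB_single_left, T_single]
      induction y using Finsupp.induction_linear with
      | zero => rw [Finsupp.sum_zero_index, map_zero]; exact (LinearMap.comp_zero _).symm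
      | add f g hf hg =>
          rw [Finsupp.sum_add_index' (fun r => mG_zero_right q p r l)
              (fun r m m' => mG_add_right q p r l m m'), map_add, hf, hg, map_add,
            LinearMap.comp_add]
      | single r m =>
          rw [Finsupp.sum_single_index (mG_zero_right q p r l), T_single, T_mG]


section Rat
variable [Algebra ℚ H]

lemma sdGen_zero_left (q : H) (p r : ℕ+ × ℕ) (m : H) : sdGen q p 0 r m = 0 := by
  simp [sdGen]

lemma sdGen_zero_right (q : H) (p r : ℕ+ × ℕ) (l : H) : sdGen q p l r 0 = 0 := by
  simp [sdGen]

lemma sdGen_add_left (q : H) (p r : ℕ+ × ℕ) (l l' m : H) :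
    sdGen q p (l + l') r m = sdGen q p l r m + sdGen q p l' r m := by
  unfold sdGen
  have h1 : (∑ i ∈ Finset.Icc 1 p.2, (p.2.choose i * ((r.1:ℕ))^i) •
        Finsupp.single ((p.1 + r.1 : ℕ+), p.2 + r.2 - i) (q ^ (i-1) * ((l + l') * m)))
      = (∑ i ∈ Finset.Icc 1 p.2, (p.2.choose i * ((r.1:ℕ))^i) •
        Finsupp.single ((p.1 + r.1 : ℕ+), p.2 + r.2 - i) (q ^ (i-1) * (l * m)))
      + ∑ i ∈ Finset.Icc 1 p.2, (p.2.choose i * ((r.1:ℕ))^i) •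
        Finsupp.single ((p.1 + r.1 : ℕ+), p.2 + r.2 - i) (q ^ (i-1) * (l' * m)) :=
    icc_lin _ _ _ _ _ (fun i => by ring)
  have h2 : (∑ j ∈ Finset.Icc 1 r.2, (r.2.choose j * ((p.1:ℕ))^j) •
        Finsupp.single ((p.1 + r.1 : ℕ+), p.2 + r.2 - j) (q ^ (j-1) * ((l + l') * m)))
      = (∑ j ∈ Finset.Icc 1 r.2, (r.2.choose j * ((p.1:ℕ))^j) •
        Finsupp.single ((p.1 + r.1 : ℕ+), p.2 + r.2 - j) (q ^ (j-1) * (l * m)))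
      + ∑ j ∈ Finset.Icc 1 r.2, (r.2.choose j * ((p.1:ℕ))^j) •
        Finsupp.single ((p.1 + r.1 : ℕ+), p.2 + r.2 - j) (q ^ (j-1) * (l' * m)) :=
    icc_lin _ _ _ _ _ (fun j => by ring)
  rw [h1, h2]
  abel

lemma sdGen_add_right (q : H) (p r : ℕ+ × ℕ) (l m m' : H) :
    sdGen q p l r (m + m') = sdGen q p l r m + sdGen q p l r m' := by
  unfold sdGen
  have h1 : (∑ i ∈ Finset.Icc 1 p.2, (p.2.choose i * ((r.1:ℕ))^i) •
        Finsupp.single ((p.1 + r.1 : ℕ+), p.2 + r.2 - i) (q ^ (i-1) * (l * (m + m'))))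
      = (∑ i ∈ Finset.Icc 1 p.2, (p.2.choose i * ((r.1:ℕ))^i) •
        Finsupp.single ((p.1 + r.1 : ℕ+), p.2 + r.2 - i) (q ^ (i-1) * (l * m)))
      + ∑ i ∈ Finset.Icc 1 p.2, (p.2.choose i * ((r.1:ℕ))^i) •
        Finsupp.single ((p.1 + r.1 : ℕ+), p.2 + r.2 - i) (q ^ (i-1) * (l * m')) :=
    icc_lin _ _ _ _ _ (fun i => by ring)
  have h2 : (∑ j ∈ Finset.Icc 1 r.2, (r.2.choose j * ((p.1:ℕ))^j) •
        Finsupp.single ((p.1 + r.1 : ℕ+), p.2 + r.2 - j) (q ^ (j-1) * (l * (m + m'))))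
      = (∑ j ∈ Finset.Icc 1 r.2, (r.2.choose j * ((p.1:ℕ))^j) •
        Finsupp.single ((p.1 + r.1 : ℕ+), p.2 + r.2 - j) (q ^ (j-1) * (l * m)))
      + ∑ j ∈ Finset.Icc 1 r.2, (r.2.choose j * ((p.1:ℕ))^j) •
        Finsupp.single ((p.1 + r.1 : ℕ+), p.2 + r.2 - j) (q ^ (j-1) * (l * m')) :=
    icc_lin _ _ _ _ _ (fun j => by ring)
  rw [h1, h2]
  abel

lemma sdGen_smul_right (q c : H) (p r : ℕ+ × ℕ) (l m : H) :
    sdGen q p l r (c * m) = c • sdGen q p l r m := by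
  unfold sdGen
  have h1 : (∑ i ∈ Finset.Icc 1 p.2, (p.2.choose i * ((r.1:ℕ))^i) •
        Finsupp.single ((p.1 + r.1 : ℕ+), p.2 + r.2 - i) (q ^ (i-1) * (l * (c * m))))
      = c • ∑ i ∈ Finset.Icc 1 p.2, (p.2.choose i * ((r.1:ℕ))^i) •
        Finsupp.single ((p.1 + r.1 : ℕ+), p.2 + r.2 - i) (q ^ (i-1) * (l * m)) :=
    icc_smul _ _ _ _ _ (fun i => by ring)
  have h2 : (∑ j ∈ Finset.Icc 1 r.2, (r.2.choose j * ((p.1:ℕ))^j) •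
        Finsupp.single ((p.1 + r.1 : ℕ+), p.2 + r.2 - j) (q ^ (j-1) * (l * (c * m))))
      = c • ∑ j ∈ Finset.Icc 1 r.2, (r.2.choose j * ((p.1:ℕ))^j) •
        Finsupp.single ((p.1 + r.1 : ℕ+), p.2 + r.2 - j) (q ^ (j-1) * (l * m)) :=
    icc_smul _ _ _ _ _ (fun j => by ring)
  rw [h1, h2, smul_sub]

/-- `q` times the Lie bracket of generators is the commutator for `mG`. -/
lemma q_smul_sdGen (q : H) (p r : ℕ+ × ℕ) (l m : H) :
    q • sdGen q p l r m = mG q p l r m - mG q r m p l := by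
  unfold sdGen mG
  rw [sum_range_split p.2 (fun i => (p.2.choose i * ((r.1:ℕ))^i) •
        Finsupp.single (p.1 + r.1, p.2 + r.2 - i) (q ^ i * (l * m))),
    sum_range_split r.2 (fun j => (r.2.choose j * ((p.1:ℕ))^j) •
        Finsupp.single (r.1 + p.1, r.2 + p.2 - j) (q ^ j * (m * l)))]
  simp only [Nat.choose_zero_right, pow_zero, one_mul, mul_one, one_smul, Nat.sub_zero]
  have hhead : Finsupp.single ((p.1 + r.1 : ℕ+), p.2 + r.2) (l * m)
      = Finsupp.single ((r.1 + p.1 : ℕ+), r.2 + p.2) (m * l) := by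
    rw [add_comm r.1, add_comm r.2, mul_comm m l]
  rw [← hhead]
  have h1 : q • (∑ i ∈ Finset.Icc 1 p.2, (p.2.choose i * ((r.1:ℕ))^i) •
        Finsupp.single ((p.1 + r.1 : ℕ+), p.2 + r.2 - i) (q ^ (i-1) * (l * m)))
      = ∑ i ∈ Finset.Icc 1 p.2, (p.2.choose i * ((r.1:ℕ))^i) •
        Finsupp.single ((p.1 + r.1 : ℕ+), p.2 + r.2 - i) (q ^ i * (l * m)) := by
    rw [Finset.smul_sum]
    refine Finset.sum_congr rfl fun i hi => ?_
    have h1i : 1 ≤ i := (Finset.mem_Icc.mp hi).1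
    simp only [Finsupp.smul_single]
    congr 1
    simp only [smul_eq_mul, nsmul_eq_mul]
    rw [show q ^ i = q * q ^ (i-1) by rw [← pow_succ', show i - 1 + 1 = i by omega]]
    ring
  have h2 : q • (∑ j ∈ Finset.Icc 1 r.2, (r.2.choose j * ((p.1:ℕ))^j) •
        Finsupp.single ((p.1 + r.1 : ℕ+), p.2 + r.2 - j) (q ^ (j-1) * (l * m)))
      = ∑ j ∈ Finset.Icc 1 r.2, (r.2.choose j * ((p.1:ℕ))^j) •
        Finsupp.single ((r.1 + p.1 : ℕ+), r.2 + p.2 - j) (q ^ j * (m * l)) := by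
    rw [Finset.smul_sum]
    refine Finset.sum_congr rfl fun j hj => ?_
    have h1j : 1 ≤ j := (Finset.mem_Icc.mp hj).1
    rw [show ((r.1 + p.1 : ℕ+), r.2 + p.2 - j) = ((p.1 + r.1 : ℕ+), p.2 + r.2 - j) by
      rw [add_comm r.1, add_comm r.2]]
    simp only [Finsupp.smul_single]
    congr 1
    simp only [smul_eq_mul, nsmul_eq_mul]
    rw [show q ^ j = q * q ^ (j-1) by rw [← pow_succ', show j - 1 + 1 = j by omega]]
    ring
  rw [smul_sub, h1, h2]
  abel

lemma sdBr_zero_left (q : H) (y : SemiDefW H) : sdBr q 0 y = 0 :=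
  Finsupp.sum_zero_index

lemma sdBr_zero_right (q : H) (x : SemiDefW H) : sdBr q x 0 = 0 := by
  unfold sdBr
  rw [show (fun (p : ℕ+ × ℕ) (lam : H) => Finsupp.sum 0 fun r mu => sdGen q p lam r mu)
    = fun _ _ => 0 from funext fun p => funext fun lam => Finsupp.sum_zero_index]
  exact Finset.sum_const_zero

lemma sdBr_single_left (q : H) (p : ℕ+ × ℕ) (l : H) (y : SemiDefW H) :
    sdBr q (Finsupp.single p l) y = y.sum fun r m => sdGen q p l r m := by
  unfold sdBr
  rw [Finsupp.sum_single_index]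
  simp [sdGen_zero_left]

lemma sdBr_single_single (q : H) (p r : ℕ+ × ℕ) (l m : H) :
    sdBr q (Finsupp.single p l) (Finsupp.single r m) = sdGen q p l r m := by
  rw [sdBr_single_left, Finsupp.sum_single_index (sdGen_zero_right q p r l)]

lemma sdBr_add_left (q : H) (x x' y : SemiDefW H) :
    sdBr q (x + x') y = sdBr q x y + sdBr q x' y := by
  unfold sdBr
  refine Finsupp.sum_add_index' (fun p => by simp [sdGen_zero_left]) fun p l l' => ?_
  simp [sdGen_add_left]

lemma sdBr_add_right (q : H) (x y y' : SemiDefW H) :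
    sdBr q x (y + y') = sdBr q x y + sdBr q x y' := by
  unfold sdBr
  rw [← Finsupp.sum_add]
  refine Finsupp.sum_congr fun p _ => ?_
  exact Finsupp.sum_add_index' (fun r => sdGen_zero_right q p r _) fun r m m' =>
    sdGen_add_right q p r _ m m'

lemma sdBr_smul_right (q c : H) (x y : SemiDefW H) :
    sdBr q x (c • y) = c • sdBr q x y := by
  unfold sdBr
  rw [Finsupp.smul_sum]
  refine Finsupp.sum_congr fun p _ => ?_
  rw [Finsupp.sum_smul_index' (fun r => sdGen_zero_right q p r _), Finsupp.smul_sum]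
  refine Finsupp.sum_congr fun r _ => ?_
  rw [smul_eq_mul, sdGen_smul_right]

lemma q_smul_sdBr (q : H) (x y : SemiDefW H) :
    q • sdBr q x y = mB q x y - mB q y x := by
  unfold sdBr mB
  rw [Finsupp.smul_sum]
  have step : ∀ p lam, q • (y.sum fun r mu => sdGen q p lam r mu)
      = (y.sum fun r mu => mG q p lam r mu) - (y.sum fun r mu => mG q r mu p lam) := by
    intro p lam
    rw [Finsupp.smul_sum, ← Finsupp.sum_sub]
    refine Finsupp.sum_congr fun r _ => ?_
    exact q_smul_sdGen q p r lam _
  calc x.sum (fun p lam => q • y.sum fun r mu => sdGen q p lam r mu)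
      = x.sum (fun p lam => (y.sum fun r mu => mG q p lam r mu)
          - y.sum fun r mu => mG q r mu p lam) :=
        Finsupp.sum_congr fun p _ => step p _
    _ = (x.sum fun p lam => y.sum fun r mu => mG q p lam r mu)
          - x.sum fun p lam => y.sum fun r mu => mG q r mu p lam := Finsupp.sum_sub
    _ = (x.sum fun p lam => y.sum fun r mu => mG q p lam r mu)
          - y.sum fun r mu => x.sum fun p lam => mG q r mu p lam := by
        congr 1
        exact Finsupp.sum_comm x y _

/-- Jacobi identity when `q` is a nonzerodivisor (domain, `q ≠ 0`). -/
lemma jacobi_domain [IsDomain H] (q : H) (hq : q ≠ 0) (x y z : SemiDefW H) :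
    sdBr q x (sdBr q y z) + sdBr q y (sdBr q z x) + sdBr q z (sdBr q x y) = 0 := by
  set J := sdBr q x (sdBr q y z) + sdBr q y (sdBr q z x) + sdBr q z (sdBr q x y) with hJ
  have term : ∀ a b c : SemiDefW H, q • (q • sdBr q a (sdBr q b c)) =
      (mB q a (mB q b c) - mB q a (mB q c b)) -
        (mB q (mB q b c) a - mB q (mB q c b) a) := by
    intro a b c
    rw [q_smul_sdBr, smul_sub, ← mB_smul_right q q a (sdBr q b c),
      ← mB_smul_left q q (sdBr q b c) a, q_smul_sdBr, mB_sub_right, mB_sub_left]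
  have hqqJ : q • (q • J) = 0 := by
    have e : q • (q • J) = (mB q x (mB q y z) - mB q x (mB q z y) -
        (mB q (mB q y z) x - mB q (mB q z y) x))
      + ((mB q y (mB q z x) - mB q y (mB q x z) -
        (mB q (mB q z x) y - mB q (mB q x z) y))
      + (mB q z (mB q x y) - mB q z (mB q y x) -
        (mB q (mB q x y) z - mB q (mB q y x) z))) := by
      rw [hJ, smul_add, smul_add, smul_add, smul_add, term, term, term]
      abel
    rw [e]
    apply T_inj q
    simp only [map_add, map_sub, map_zero, T_mB]
    simp only [← Module.End.mul_eq_comp]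
    noncomm_ring
  have : ∀ k, J k = 0 := by
    intro k
    have h0 : q * (q * J k) = 0 := by
      have := congrArg (fun w => w k) hqqJ
      simpa [Finsupp.smul_apply, smul_eq_mul] using this
    rcases mul_eq_zero.mp h0 with h | h
    · exact absurd h hq
    rcases mul_eq_zero.mp h with h | h
    · exact absurd h hq
    · exact h
  ext k
  exact this k

end Rat

section Transfer
variable {R : Type*} [CommRing R] [Algebra ℚ R] {H2 : Type*} [CommRing H2] [Algebra ℚ H2]

/-- base change along a ring hom, coefficientwise -/
def Fmap (φ : R →+* H2) : ((ℕ+ × ℕ) →₀ R) →+ ((ℕ+ × ℕ) →₀ H2) :=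
  Finsupp.mapRange.addMonoidHom φ.toAddMonoidHom

lemma Fmap_single (φ : R →+* H2) (k : ℕ+ × ℕ) (v : R) :
    Fmap φ (Finsupp.single k v) = Finsupp.single k (φ v) := by
  simp [Fmap, Finsupp.mapRange.addMonoidHom, Finsupp.mapRange_single]

lemma Fmap_sdGen (φ : R →+* H2) (qR : R) (p r : ℕ+ × ℕ) (a b : R) :
    Fmap φ (sdGen qR p a r b) = sdGen (φ qR) p (φ a) r (φ b) := by
  unfold sdGen
  rw [map_sub, map_sum, map_sum]
  congr 1
  · refine Finset.sum_congr rfl fun i _ => ?_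
    rw [map_nsmul, Fmap_single, map_mul, map_pow, map_mul]
  · refine Finset.sum_congr rfl fun j _ => ?_
    rw [map_nsmul, Fmap_single, map_mul, map_pow, map_mul]

lemma Fmap_sdBr_single (φ : R →+* H2) (qR : R) (p : ℕ+ × ℕ) (c : R)
    (w : (ℕ+ × ℕ) →₀ R) :
    sdBr (φ qR) (Finsupp.single p (φ c)) (Fmap φ w)
      = Fmap φ (sdBr qR (Finsupp.single p c) w) := by
  rw [sdBr_single_left, sdBr_single_left]
  rw [show Fmap φ w = Finsupp.mapRange φ (map_zero φ) w from rfl]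
  rw [Finsupp.sum_mapRange_index (fun r => sdGen_zero_right (φ qR) p r (φ c))]
  rw [map_finsuppSum (Fmap φ) w (fun r b => sdGen qR p c r b)]
  exact Finsupp.sum_congr fun r _ => (Fmap_sdGen φ qR p r c (w r)).symm

end Transfer

end SDAux
end SDAuxSection

theorem statement6 (H : Type*) [CommRing H] [Algebra ℚ H] (q : H) :
    (∀ m m' n n' : ℕ,
      (Polynomial.X + Polynomial.C (m' • q)) ^ n * Polynomial.X ^ n'
        - Polynomial.X ^ n * (Polynomial.X + Polynomial.C (m • q)) ^ n' =
      Polynomial.C q *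
        ((∑ i ∈ Finset.Icc 1 n,
            (n.choose i * m' ^ i) •
              (Polynomial.X ^ (n + n' - i) * Polynomial.C (q ^ (i - 1))))
          - ∑ j ∈ Finset.Icc 1 n',
              (n'.choose j * m ^ j) •
                (Polynomial.X ^ (n + n' - j) * Polynomial.C (q ^ (j - 1))))) ∧
    (∀ x y z : SemiDefW H,
      sdBr q x (sdBr q y z) + sdBr q y (sdBr q z x) + sdBr q z (sdBr q x y) = 0) := by
  constructor
  · -- part (a)
    intro m m' n n'
    rw [show (X:H[X]) + C (m' • q) = C (m' • q) + X from add_comm _ _, add_pow]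
    rw [show (X:H[X]) + C (m • q) = C (m • q) + X from add_comm _ _, add_pow]
    rw [Finset.sum_mul, Finset.mul_sum]
    rw [SDAux.sum_range_split n
          (fun k => C (m' • q) ^ k * X ^ (n - k) * (n.choose k : H[X]) * X ^ n'),
        SDAux.sum_range_split n'
          (fun k => X ^ n * (C (m • q) ^ k * X ^ (n' - k) * (n'.choose k : H[X])))]
    simp only [pow_zero, one_mul, Nat.choose_zero_right, Nat.cast_one, mul_one, Nat.sub_zero]
    rw [mul_sub, Finset.mul_sum, Finset.mul_sum]
    have h1 : ∀ i ∈ Finset.Icc 1 n, C (m' • q) ^ i * X ^ (n - i) * (n.choose i : H[X]) * X ^ n'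
        = C q * ((n.choose i * m' ^ i) • ((X:H[X]) ^ (n + n' - i) * C (q ^ (i - 1)))) := by
      intro i hi
      simp only [Finset.mem_Icc] at hi
      rw [nsmul_eq_mul, nsmul_eq_mul]
      have e1 : n + n' - i = (n - i) + n' := by omega
      have e2 : C q * C (q ^ (i-1)) = (C q : H[X]) ^ i := by
        rw [← C_mul, ← pow_succ', show i - 1 + 1 = i by omega, C_pow]
      have e3 : C ((m':H) * q) ^ i = ((m':H[X]))^i * (C q)^i := by
        rw [C_mul, mul_pow, map_natCast]
      rw [e1]
      push_cast
      rw [e3]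
      ring_nf
      rw [← e2]
      ring
    have h2 : ∀ j ∈ Finset.Icc 1 n',
        (X:H[X]) ^ n * (C (m • q) ^ j * X ^ (n' - j) * (n'.choose j : H[X]))
        = C q * ((n'.choose j * m ^ j) • ((X:H[X]) ^ (n + n' - j) * C (q ^ (j - 1)))) := by
      intro j hj
      simp only [Finset.mem_Icc] at hj
      rw [nsmul_eq_mul, nsmul_eq_mul]
      have e1 : n + n' - j = n + (n' - j) := by omega
      have e2 : C q * C (q ^ (j-1)) = (C q : H[X]) ^ j := by
        rw [← C_mul, ← pow_succ', show j - 1 + 1 = j by omega, C_pow]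
      have e3 : C ((m:H) * q) ^ j = ((m:H[X]))^j * (C q)^j := by
        rw [C_mul, mul_pow, map_natCast]
      rw [e1]
      push_cast
      rw [e3]
      ring_nf
      rw [← e2]
      ring
    rw [Finset.sum_congr rfl h1, Finset.sum_congr rfl h2]
    ring
  · -- part (b)
    classical
    have key : ∀ (p r s : ℕ+ × ℕ) (a b c : H),
        sdBr q (Finsupp.single p a) (sdBr q (Finsupp.single r b) (Finsupp.single s c))
        + sdBr q (Finsupp.single r b) (sdBr q (Finsupp.single s c) (Finsupp.single p a))
        + sdBr q (Finsupp.single s c) (sdBr q (Finsupp.single p a) (Finsupp.single r b))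
          = 0 := by
      intro p r s a b c
      set R4 := MvPolynomial (Fin 4) ℚ with hR4
      set φ : R4 →+* H := (MvPolynomial.aeval (R := ℚ) ![q, a, b, c]).toRingHom with hφ
      have hq : q = φ (MvPolynomial.X 0) := by
        rw [hφ]
        show _ = (MvPolynomial.aeval ![q, a, b, c]) (MvPolynomial.X 0)
        rw [MvPolynomial.aeval_X]
        rfl
      have ha : a = φ (MvPolynomial.X 1) := by
        rw [hφ]
        show _ = (MvPolynomial.aeval ![q, a, b, c]) (MvPolynomial.X 1)
        rw [MvPolynomial.aeval_X]
        rfl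
      have hb : b = φ (MvPolynomial.X 2) := by
        rw [hφ]
        show _ = (MvPolynomial.aeval ![q, a, b, c]) (MvPolynomial.X 2)
        rw [MvPolynomial.aeval_X]
        rfl
      have hc : c = φ (MvPolynomial.X 3) := by
        rw [hφ]
        show _ = (MvPolynomial.aeval ![q, a, b, c]) (MvPolynomial.X 3)
        rw [MvPolynomial.aeval_X]
        rfl
      rw [hq, ha, hb, hc]
      have t1 : sdBr (φ (MvPolynomial.X 0)) (Finsupp.single r (φ (MvPolynomial.X 2)))
            (Finsupp.single s (φ (MvPolynomial.X 3)))
          = SDAux.Fmap φ (sdBr (MvPolynomial.X 0) (Finsupp.single r (MvPolynomial.X 2))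
              (Finsupp.single s (MvPolynomial.X 3))) := by
        rw [SDAux.sdBr_single_single, SDAux.sdBr_single_single, SDAux.Fmap_sdGen]
      have t2 : sdBr (φ (MvPolynomial.X 0)) (Finsupp.single s (φ (MvPolynomial.X 3)))
            (Finsupp.single p (φ (MvPolynomial.X 1)))
          = SDAux.Fmap φ (sdBr (MvPolynomial.X 0) (Finsupp.single s (MvPolynomial.X 3))
              (Finsupp.single p (MvPolynomial.X 1))) := by
        rw [SDAux.sdBr_single_single, SDAux.sdBr_single_single, SDAux.Fmap_sdGen]
      have t3 : sdBr (φ (MvPolynomial.X 0)) (Finsupp.single p (φ (MvPolynomial.X 1)))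
            (Finsupp.single r (φ (MvPolynomial.X 2)))
          = SDAux.Fmap φ (sdBr (MvPolynomial.X 0) (Finsupp.single p (MvPolynomial.X 1))
              (Finsupp.single r (MvPolynomial.X 2))) := by
        rw [SDAux.sdBr_single_single, SDAux.sdBr_single_single, SDAux.Fmap_sdGen]
      rw [t1, t2, t3, SDAux.Fmap_sdBr_single, SDAux.Fmap_sdBr_single, SDAux.Fmap_sdBr_single,
        ← map_add, ← map_add]
      rw [SDAux.jacobi_domain (MvPolynomial.X 0) (MvPolynomial.X_ne_zero 0)
        (Finsupp.single p (MvPolynomial.X 1)) (Finsupp.single r (MvPolynomial.X 2))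
        (Finsupp.single s (MvPolynomial.X 3)), map_zero]
    intro x y z
    induction x using Finsupp.induction_linear with
    | zero => simp [SDAux.sdBr_zero_left, SDAux.sdBr_zero_right]
    | add x1 x2 h1 h2 =>
        simp only [SDAux.sdBr_add_left, SDAux.sdBr_add_right]
        calc sdBr q x1 (sdBr q y z) + sdBr q x2 (sdBr q y z)
              + (sdBr q y (sdBr q z x1) + sdBr q y (sdBr q z x2))
              + (sdBr q z (sdBr q x1 y) + sdBr q z (sdBr q x2 y))
            = (sdBr q x1 (sdBr q y z) + sdBr q y (sdBr q z x1) + sdBr q z (sdBr q x1 y))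
              + (sdBr q x2 (sdBr q y z) + sdBr q y (sdBr q z x2)
                 + sdBr q z (sdBr q x2 y)) := by abel
          _ = 0 := by rw [h1, h2, add_zero]
    | single p a =>
        induction y using Finsupp.induction_linear with
        | zero => simp [SDAux.sdBr_zero_left, SDAux.sdBr_zero_right]
        | add y1 y2 h1 h2 =>
            simp only [SDAux.sdBr_add_left, SDAux.sdBr_add_right]
            calc sdBr q (Finsupp.single p a) (sdBr q y1 z)
                  + sdBr q (Finsupp.single p a) (sdBr q y2 z)
                  + (sdBr q y1 (sdBr q z (Finsupp.single p a))
                     + sdBr q y2 (sdBr q z (Finsupp.single p a)))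
                  + (sdBr q z (sdBr q (Finsupp.single p a) y1)
                     + sdBr q z (sdBr q (Finsupp.single p a) y2))
                = (sdBr q (Finsupp.single p a) (sdBr q y1 z)
                    + sdBr q y1 (sdBr q z (Finsupp.single p a))
                    + sdBr q z (sdBr q (Finsupp.single p a) y1))
                  + (sdBr q (Finsupp.single p a) (sdBr q y2 z)
                    + sdBr q y2 (sdBr q z (Finsupp.single p a))
                    + sdBr q z (sdBr q (Finsupp.single p a) y2)) := by abel
              _ = 0 := by rw [h1, h2, add_zero]
        | single r b =>
            induction z using Finsupp.induction_linear with
            | zero => simp [SDAux.sdBr_zero_left, SDAux.sdBr_zero_right]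
            | add z1 z2 h1 h2 =>
                simp only [SDAux.sdBr_add_left, SDAux.sdBr_add_right]
                calc sdBr q (Finsupp.single p a) (sdBr q (Finsupp.single r b) z1)
                      + sdBr q (Finsupp.single p a) (sdBr q (Finsupp.single r b) z2)
                      + (sdBr q (Finsupp.single r b) (sdBr q z1 (Finsupp.single p a))
                         + sdBr q (Finsupp.single r b) (sdBr q z2 (Finsupp.single p a)))
                      + (sdBr q z1 (sdBr q (Finsupp.single p a) (Finsupp.single r b))
                         + sdBr q z2 (sdBr q (Finsupp.single p a) (Finsupp.single r b)))
                    = (sdBr q (Finsupp.single p a) (sdBr q (Finsupp.single r b) z1)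
                        + sdBr q (Finsupp.single r b) (sdBr q z1 (Finsupp.single p a))
                        + sdBr q z1 (sdBr q (Finsupp.single p a) (Finsupp.single r b)))
                      + (sdBr q (Finsupp.single p a) (sdBr q (Finsupp.single r b) z2)
                        + sdBr q (Finsupp.single r b) (sdBr q z2 (Finsupp.single p a))
                        + sdBr q z2 (sdBr q (Finsupp.single p a) (Finsupp.single r b))) := by
                      abel
                  _ = 0 := by rw [h1, h2, add_zero]
            | single s c => exact key p r s a b c
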